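/- Let (a_i)_{i∈ℤ} and (b_i)_{i∈ℤ} be sequences of nonnegative integers such that: there is an integer N with a_i = 0 for all i ≥ N and b_i = 0 for all i ≤ −N; a_i → +∞ as i → −∞ and b_i → +∞ as i → +∞; a_i ≥ b_i for i < 0; and a_i ≤ b_i for i ≥ 0. Let X = Y = ⊕_{i∈ℤ} T⁺ and let D : X → Y be the F[U]-module homomorphism whose j-th coordinate of D((x_i)_i) is U^{a_j}·x_j + U^{b_{j+1}}·x_{j+1} (so the off-diagonal maps go from the (i)-th summand to the (i−1)-st summand). Then no nonzero element of Y supported only in the (−1)-st summand lies in the image of D, and the composite of the inclusion of the (−1)-st summand T⁺ → Y with the quotient map Y → Y/im(D) is an isomorphism of F[U]-modules; in particular coker(D) ≅ T⁺. (Cokernel part of Lemma 3.9 of the paper.) -/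

import Mathlib

open Polynomial LaurentPolynomial DirectSum Filter

noncomputable section

/-- The tower `T⁺ = F[U,U⁻¹] / U·F[U]` as an `F[U]`-module. -/
abbrev Tplus (F : Type*) [Field F] :=
  LaurentPolynomial F ⧸ (Submodule.span (Polynomial F) {(T 1 : LaurentPolynomial F)})

namespace Stmt3Aux

variable {F : Type*} [Field F]

lemma smul_surj (k : ℕ) (t : Tplus F) : ∃ s : Tplus F, (X : Polynomial F)^k • s = t := by
  obtain ⟨q, rfl⟩ := Submodule.Quotient.mk_surjective _ t
  refine ⟨Submodule.Quotient.mk (T (-(k:ℤ)) * q), ?_⟩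
  rw [← Submodule.Quotient.mk_smul, Algebra.smul_def]
  congr 1
  show toLaurent (X^k) * _ = q
  rw [map_pow, toLaurent_X, T_pow, ← mul_assoc, ← T_add]
  simp

/-- The inclusion of the `i`-th summand. -/
abbrev L (F : Type*) [Field F] (i : ℤ) : Tplus F →ₗ[Polynomial F] ⨁ _i : ℤ, Tplus F :=
  DirectSum.lof (Polynomial F) ℤ (fun _ => Tplus F) i

lemma L_apply_ne {i j : ℤ} (h : i ≠ j) (x : Tplus F) : (L F i x) j = 0 := by
  have h2 := DirectSum.of_eq_of_ne (β := fun _ : ℤ => Tplus F) i j x (Ne.symm h)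
  rwa [← DirectSum.lof_eq_of (Polynomial F)] at h2

lemma L_apply_same (i : ℤ) (x : Tplus F) : (L F i x) i = x := DirectSum.lof_apply _ _ _

lemma D_lof (a b : ℤ → ℕ) (D : (⨁ _i : ℤ, Tplus F) →ₗ[Polynomial F] (⨁ _i : ℤ, Tplus F))
    (hD : ∀ (x : ⨁ _i : ℤ, Tplus F) (j : ℤ),
      D x j = (X : Polynomial F) ^ (a j) • x j + (X : Polynomial F) ^ (b (j + 1)) • x (j + 1))
    (i : ℤ) (x : Tplus F) :
    D (L F i x) = L F i ((X : Polynomial F) ^ (a i) • x)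
      + L F (i-1) ((X : Polynomial F) ^ (b i) • x) := by
  refine DFinsupp.ext fun j => ?_
  rw [DirectSum.add_apply, hD]
  rcases eq_or_ne j i with rfl | hji
  · simp only [L_apply_same, L_apply_ne (show j ≠ j + 1 by omega),
      L_apply_ne (show j - 1 ≠ j by omega), smul_zero, add_zero]
  rcases eq_or_ne j (i-1) with rfl | hji'
  · simp only [L_apply_ne (show i ≠ i - 1 by omega), show i - 1 + 1 = i from by omega,
      L_apply_same, smul_zero, zero_add]
  · simp only [L_apply_ne (Ne.symm hji), L_apply_ne (show i ≠ j + 1 by omega),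
      L_apply_ne (show i - 1 ≠ j by omega), smul_zero, add_zero]

/-- The exponents used in the functional `φ` that kills the image of `D`. -/
def cc (a b : ℤ → ℕ) (j : ℤ) : ℤ :=
  if 0 ≤ j then ∑ k ∈ Finset.range (j.toNat + 1), ((b k : ℤ) - (a k : ℤ))
  else ∑ m ∈ Finset.range (-j - 1).toNat, ((a (-(m+1 : ℕ)) : ℤ) - (b (-(m+1 : ℕ)) : ℤ))

lemma cc_nonneg (a b : ℤ → ℕ) (hab₁ : ∀ i : ℤ, i < 0 → b i ≤ a i)
    (hab₂ : ∀ i : ℤ, 0 ≤ i → a i ≤ b i) (j : ℤ) : 0 ≤ cc a b j := by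
  unfold cc
  split
  · refine Finset.sum_nonneg fun k _ => ?_
    have := hab₂ k (by positivity)
    omega
  · refine Finset.sum_nonneg fun m _ => ?_
    have := hab₁ (-(m+1 : ℕ)) (by omega)
    omega

lemma cc_neg_one (a b : ℤ → ℕ) : cc a b (-1) = 0 := by
  unfold cc
  norm_num

lemma cc_step (a b : ℤ → ℕ) (j : ℤ) : cc a b j + a j = cc a b (j - 1) + b j := by
  unfold cc
  rcases lt_trichotomy j 0 with hj | rfl | hj
  · rw [if_neg (by omega), if_neg (by omega)]
    have h1 : (-(j-1) - 1).toNat = (-j - 1).toNat + 1 := by omega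
    rw [h1, Finset.sum_range_succ]
    have h2 : (-(((-j - 1).toNat : ℤ) + 1)) = j := by omega
    push_cast
    rw [h2]
    ring
  · rw [if_pos le_rfl, if_neg (by omega)]
    norm_num
  · rw [if_pos (by omega), if_pos (by omega)]
    have h1 : j.toNat + 1 = ((j-1).toNat + 1) + 1 := by omega
    rw [h1, Finset.sum_range_succ]
    have h2 : (((j-1).toNat : ℤ) + 1) = j := by omega
    push_cast
    rw [h2]
    ring

def nn (a b : ℤ → ℕ) (j : ℤ) : ℕ := (cc a b j).toNat

def eps (F : Type*) [Field F] (j : ℤ) : Polynomial F := if Even j then -1 else 1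

lemma eps_step (F : Type*) [Field F] (j : ℤ) : eps F (j - 1) = - eps F j := by
  by_cases h : Even j <;> simp [eps, Int.even_sub_one, h]

/-- The functional `φ(y) = ∑_j ε_j U^{n_j} y_j`. -/
def phi (a b : ℤ → ℕ) : (⨁ _i : ℤ, Tplus F) →ₗ[Polynomial F] Tplus F :=
  DirectSum.toModule (Polynomial F) ℤ (Tplus F)
    (fun j => (eps F j * X ^ nn a b j) • LinearMap.id)

lemma phi_lof (a b : ℤ → ℕ) (j : ℤ) (x : Tplus F) :
    phi a b (L F j x) = (eps F j * X ^ nn a b j) • x := by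
  rw [phi, DirectSum.toModule_lof]
  rfl

lemma phi_D (a b : ℤ → ℕ) (hab₁ : ∀ i : ℤ, i < 0 → b i ≤ a i)
    (hab₂ : ∀ i : ℤ, 0 ≤ i → a i ≤ b i)
    (D : (⨁ _i : ℤ, Tplus F) →ₗ[Polynomial F] (⨁ _i : ℤ, Tplus F))
    (hD : ∀ (x : ⨁ _i : ℤ, Tplus F) (j : ℤ),
      D x j = (X : Polynomial F) ^ (a j) • x j + (X : Polynomial F) ^ (b (j + 1)) • x (j + 1))
    (x : ⨁ _i : ℤ, Tplus F) : phi a b (D x) = 0 := by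
  have h : (phi a b).comp D = (0 : (⨁ _i : ℤ, Tplus F) →ₗ[Polynomial F] Tplus F) := by
    apply DirectSum.linearMap_ext
    intro i
    ext v
    simp only [LinearMap.comp_apply, LinearMap.zero_apply]
    rw [D_lof a b D hD, map_add, phi_lof, phi_lof, smul_smul, smul_smul]
    have hn : nn a b i + a i = nn a b (i-1) + b i := by
      have h1 := cc_step a b i
      have h2 := cc_nonneg a b hab₁ hab₂ i
      have h3 := cc_nonneg a b hab₁ hab₂ (i-1)
      unfold nn
      omega
    rw [eps_step, mul_assoc, mul_assoc, ← pow_add, ← pow_add, hn]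
    ring_nf
    rw [← add_smul]
    ring_nf
    simp
  exact DFunLike.congr_fun h x

end Stmt3Aux

open Stmt3Aux

/-- Lemma 3.9, cokernel part: no nonzero element of `Y` supported only in the `(-1)`-st
summand lies in the image of `D`, and the composite of the inclusion of the `(-1)`-st
summand with the quotient map `Y → Y/im D` is an isomorphism; so `coker D ≅ T⁺`. -/
theorem stmt_3 (F : Type*) [Field F] (a b : ℤ → ℕ)
    (hvanish : ∃ N : ℤ, (∀ i, N ≤ i → a i = 0) ∧ (∀ i, i ≤ -N → b i = 0))
    (ha : Tendsto a atBot atTop) (hb : Tendsto b atTop atTop)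
    (hab₁ : ∀ i : ℤ, i < 0 → b i ≤ a i) (hab₂ : ∀ i : ℤ, 0 ≤ i → a i ≤ b i)
    (D : (⨁ _i : ℤ, Tplus F) →ₗ[Polynomial F] (⨁ _i : ℤ, Tplus F))
    (hD : ∀ (x : ⨁ _i : ℤ, Tplus F) (j : ℤ),
      D x j = (X : Polynomial F) ^ (a j) • x j + (X : Polynomial F) ^ (b (j + 1)) • x (j + 1)) :
    (∀ y : ⨁ _i : ℤ, Tplus F, y ∈ LinearMap.range D → (∀ i : ℤ, i ≠ -1 → y i = 0) → y = 0) ∧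
    Function.Bijective
      ((Submodule.mkQ (R := Polynomial F) (M := ⨁ _i : ℤ, Tplus F) (LinearMap.range D)).comp (DirectSum.lof (Polynomial F) ℤ (fun _ => Tplus F) (-1))) := by
  have key1 : ∀ y : ⨁ _i : ℤ, Tplus F, y ∈ LinearMap.range D →
      (∀ i : ℤ, i ≠ -1 → y i = 0) → y = 0 := by
    intro y hy hsupp
    obtain ⟨x, rfl⟩ := hy
    have h0 := phi_D a b hab₁ hab₂ D hD x
    have hy' : D x = L F (-1) (D x (-1)) := by
      refine DFinsupp.ext fun j => ?_
      rcases eq_or_ne j (-1) with rfl | hj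
      · rw [L_apply_same]
      · rw [hsupp j hj, L_apply_ne (Ne.symm hj)]
    rw [hy', phi_lof] at h0
    have hn1 : nn a b (-1) = 0 := by simp [nn, cc_neg_one]
    have heps : eps F (-1) = 1 := by simp [eps, Int.even_iff]
    rw [hn1, heps, pow_zero, one_mul, one_smul] at h0
    rw [hy', h0, map_zero]
  refine ⟨key1, ?_, ?_⟩
  · -- injectivity
    rw [← LinearMap.ker_eq_bot, LinearMap.ker_eq_bot']
    intro z hz
    simp only [LinearMap.comp_apply, Submodule.mkQ_apply] at hz
    rw [Submodule.Quotient.mk_eq_zero] at hz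
    have h0 := key1 _ hz (fun i hi => L_apply_ne (Ne.symm hi) z)
    have := congrArg (fun w : ⨁ _i : ℤ, Tplus F => w (-1)) h0
    simpa [L_apply_same] using this
  · -- surjectivity
    set S : Submodule (Polynomial F) (⨁ _i : ℤ, Tplus F) :=
      LinearMap.range D ⊔ LinearMap.range (L F (-1)) with hSdef
    have down : ∀ (k : ℕ) (x : Tplus F), L F ((k:ℤ) - 1) x ∈ S := by
      intro k
      induction k with
      | zero =>
        intro x
        rw [show ((0:ℕ):ℤ) - 1 = -1 by norm_num]
        exact Submodule.mem_sup_right ⟨x, rfl⟩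
      | succ k ih =>
        intro x
        rw [show (((k+1:ℕ)):ℤ) - 1 = (k:ℤ) by push_cast; ring]
        obtain ⟨w, hw⟩ := smul_surj (a (k:ℤ)) x
        have hDl := D_lof a b D hD (k:ℤ) w
        have h2 : L F (k:ℤ) x
            = D (L F (k:ℤ) w) - L F ((k:ℤ)-1) ((X : Polynomial F) ^ (b (k:ℤ)) • w) := by
          rw [hDl, hw]
          abel
        rw [h2]
        convert add_mem (Submodule.mem_sup_left (LinearMap.mem_range_self D _))
          (ih (-((X : Polynomial F) ^ (b (k:ℤ)) • w))) using 1
        rw [map_neg, sub_eq_add_neg]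
    have up : ∀ (k : ℕ) (x : Tplus F), L F (-1 - (k:ℤ)) x ∈ S := by
      intro k
      induction k with
      | zero =>
        intro x
        rw [show (-1 : ℤ) - ((0:ℕ):ℤ) = -1 by norm_num]
        exact Submodule.mem_sup_right ⟨x, rfl⟩
      | succ k ih =>
        intro x
        obtain ⟨w, hw⟩ := smul_surj (b ((-1 - ((k+1:ℕ):ℤ)) + 1)) x
        have hDl := D_lof a b D hD ((-1 - ((k+1:ℕ):ℤ)) + 1) w
        rw [show (-1 - ((k+1:ℕ):ℤ)) + 1 - 1 = -1 - ((k+1:ℕ):ℤ) by ring] at hDl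
        have h2 : L F (-1 - ((k+1:ℕ):ℤ)) x
            = D (L F ((-1 - ((k+1:ℕ):ℤ)) + 1) w)
              - L F ((-1 - ((k+1:ℕ):ℤ)) + 1)
                  ((X : Polynomial F) ^ (a ((-1 - ((k+1:ℕ):ℤ)) + 1)) • w) := by
          rw [hDl, hw]
          abel
        rw [h2]
        have h3 : (-1 - ((k+1:ℕ):ℤ)) + 1 = -1 - (k:ℤ) := by push_cast; ring
        convert add_mem (Submodule.mem_sup_left (LinearMap.mem_range_self D _))
          (ih (-((X : Polynomial F) ^ (a ((-1 - ((k+1:ℕ):ℤ)) + 1)) • w))) using 1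
        rw [map_neg, sub_eq_add_neg, h3]
    have key : ∀ (i : ℤ) (x : Tplus F), L F i x ∈ S := by
      intro i x
      rcases le_or_gt (-1) i with hi | hi
      · have h1 : i = ((i+1).toNat : ℤ) - 1 := by omega
        rw [h1]
        exact down _ x
      · have h1 : i = -1 - (((-1 - i).toNat : ℤ)) := by omega
        rw [h1]
        exact up _ x
    have hS : S = ⊤ := by
      rw [eq_top_iff]
      intro y _
      refine DirectSum.induction_on y (zero_mem S) (fun i x => ?_) (fun x y hx hy => add_mem hx hy)
      rw [← DirectSum.lof_eq_of (Polynomial F)]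
      exact key i x
    intro q
    obtain ⟨y, rfl⟩ := Submodule.Quotient.mk_surjective _ q
    have hy : y ∈ S := hS ▸ Submodule.mem_top
    rw [hSdef, Submodule.mem_sup] at hy
    obtain ⟨d, hd, l, hl, rfl⟩ := hy
    obtain ⟨z, rfl⟩ := hl
    refine ⟨z, ?_⟩
    simp only [LinearMap.comp_apply, Submodule.mkQ_apply]
    rw [Submodule.Quotient.eq]
    obtain ⟨x, rfl⟩ := hd
    exact ⟨-x, by rw [map_neg]; abel⟩
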